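/- arXiv:1107.4914 — 2 statements merged into one kernel-verified Lean document; each statement's English description precedes it below -/
import Mathlib

section
/- For n ≥ 1, the function J_n(t) = ∫₀ᵗ dt₁ ∫_{t₁}ᵗ dt₂ ⋯ ∫_{t_{n−1}}ᵗ dt_n ∏_{k=1}^{n+1} sinh(c(t_k − t_{k−1})) (t₀=0, t_{n+1}=t) satisfies J_n''(t) = c J_{n−1}(t) + c² J_n(t), with J₀(t) = sinh(ct). -/
open Real MeasureTheory

/-- Iterated simplex integral with `s₀ = a`, `s_{n+1} = t`. -/
noncomputable def iterInt (f : ℝ → ℝ) : ℕ → ℝ → ℝ → ℝ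
  | 0, a, t => f (t - a)
  | n+1, a, t => ∫ s in a..t, f (s - a) * iterInt f n s t

/-- `J_n(t)`: simplex integral of products of hyperbolic sines of increments,
`J_0(t) = sinh (c t)`. -/
noncomputable def J (c : ℝ) (n : ℕ) (t : ℝ) : ℝ :=
  iterInt (fun u => Real.sinh (c * u)) n 0 t

/-- Translation invariance: the iterated integral only depends on `t - a`. -/
lemma iterInt_trans (c : ℝ) (n : ℕ) (a t : ℝ) :
    iterInt (fun u => Real.sinh (c * u)) n a t = J c n (t - a) := by
  induction n generalizing a t with
  | zero => simp [iterInt, J]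
  | succ n ih =>
    have h1 : iterInt (fun u => Real.sinh (c * u)) (n+1) a t
        = ∫ s in a..t, (fun u => Real.sinh (c * u) * J c n (t - a - u)) (s - a) := by
      rw [iterInt]
      apply intervalIntegral.integral_congr
      intro s _
      simp only
      rw [ih s t]
      ring_nf
    rw [h1, intervalIntegral.integral_comp_sub_right
      (fun u => Real.sinh (c * u) * J c n (t - a - u)) a, sub_self]
    have h2 : J c (n+1) (t - a)
        = ∫ s in (0:ℝ)..(t-a), Real.sinh (c * s) * J c n (t - a - s) := by
      rw [J, iterInt]
      apply intervalIntegral.integral_congr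
      intro s _
      simp only [sub_zero]
      rw [ih s (t - a)]
    rw [h2]

/-- Convolution representation. -/
lemma J_conv (c : ℝ) (n : ℕ) (t : ℝ) :
    J c (n+1) t = ∫ s in (0:ℝ)..t, Real.sinh (c * (t - s)) * J c n s := by
  have h1 : J c (n+1) t
      = ∫ s in (0:ℝ)..t, (fun x => Real.sinh (c * (t - x)) * J c n x) (t - s) := by
    rw [J, iterInt]
    apply intervalIntegral.integral_congr
    intro s _
    simp only [sub_zero, sub_sub_cancel]
    rw [iterInt_trans c n s t]
  rw [h1, intervalIntegral.integral_comp_sub_left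
    (fun x => Real.sinh (c * (t - x)) * J c n x) t, sub_self, sub_zero]

/-- The key structural formula, assuming continuity of `J c n`. -/
lemma J_formula (c : ℝ) (n : ℕ) (hcont : Continuous (J c n)) (t : ℝ) :
    J c (n+1) t
      = Real.sinh (c * t) * (∫ s in (0:ℝ)..t, Real.cosh (c * s) * J c n s)
        - Real.cosh (c * t) * (∫ s in (0:ℝ)..t, Real.sinh (c * s) * J c n s) := by
  rw [J_conv]
  have hint1 : IntervalIntegrable (fun s => Real.cosh (c * s) * J c n s) volume 0 t :=
    (((Real.continuous_cosh.comp (continuous_const.mul continuous_id)).mul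
      hcont)).intervalIntegrable 0 t
  have hint2 : IntervalIntegrable (fun s => Real.sinh (c * s) * J c n s) volume 0 t :=
    (((Real.continuous_sinh.comp (continuous_const.mul continuous_id)).mul
      hcont)).intervalIntegrable 0 t
  rw [← intervalIntegral.integral_const_mul, ← intervalIntegral.integral_const_mul,
    ← intervalIntegral.integral_sub (hint1.const_mul _) (hint2.const_mul _)]
  apply intervalIntegral.integral_congr
  intro s _
  show Real.sinh (c * (t - s)) * J c n s = _
  have : c * (t - s) = c * t - c * s := by ring
  rw [this, Real.sinh_sub]
  ring

lemma A_hasDerivAt (c : ℝ) (n : ℕ) (hcont : Continuous (J c n)) (t : ℝ) :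
    HasDerivAt (fun t => ∫ s in (0:ℝ)..t, Real.cosh (c * s) * J c n s)
      (Real.cosh (c * t) * J c n t) t :=
  (((Real.continuous_cosh.comp (continuous_const.mul continuous_id)).mul
    hcont).integral_hasStrictDerivAt 0 t).hasDerivAt

lemma B_hasDerivAt (c : ℝ) (n : ℕ) (hcont : Continuous (J c n)) (t : ℝ) :
    HasDerivAt (fun t => ∫ s in (0:ℝ)..t, Real.sinh (c * s) * J c n s)
      (Real.sinh (c * t) * J c n t) t :=
  (((Real.continuous_sinh.comp (continuous_const.mul continuous_id)).mul
    hcont).integral_hasStrictDerivAt 0 t).hasDerivAt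

lemma sinh_hasDerivAt (c t : ℝ) :
    HasDerivAt (fun t => Real.sinh (c * t)) (c * Real.cosh (c * t)) t := by
  have := (Real.hasDerivAt_sinh (c * t)).comp t
    ((hasDerivAt_id t).const_mul c)
  simpa [mul_comm, Function.comp_def] using this

lemma cosh_hasDerivAt (c t : ℝ) :
    HasDerivAt (fun t => Real.cosh (c * t)) (c * Real.sinh (c * t)) t := by
  have := (Real.hasDerivAt_cosh (c * t)).comp t
    ((hasDerivAt_id t).const_mul c)
  simpa [mul_comm, Function.comp_def] using this

/-- First derivative of `J c (n+1)`. -/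
lemma J_succ_hasDerivAt (c : ℝ) (n : ℕ) (hcont : Continuous (J c n)) (t : ℝ) :
    HasDerivAt (J c (n+1))
      (c * Real.cosh (c * t) * (∫ s in (0:ℝ)..t, Real.cosh (c * s) * J c n s)
        - c * Real.sinh (c * t) * (∫ s in (0:ℝ)..t, Real.sinh (c * s) * J c n s)) t := by
  have hA := A_hasDerivAt c n hcont t
  have hB := B_hasDerivAt c n hcont t
  have h := (((sinh_hasDerivAt c t).mul hA).sub ((cosh_hasDerivAt c t).mul hB))
  have heq : J c (n+1) = fun t =>
      Real.sinh (c * t) * (∫ s in (0:ℝ)..t, Real.cosh (c * s) * J c n s)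
        - Real.cosh (c * t) * (∫ s in (0:ℝ)..t, Real.sinh (c * s) * J c n s) :=
    funext (J_formula c n hcont)
  rw [heq]
  refine h.congr_deriv ?_
  ring

lemma J_continuous (c : ℝ) (n : ℕ) : Continuous (J c n) := by
  induction n with
  | zero =>
    have : J c 0 = fun t => Real.sinh (c * t) := by
      funext t; simp [J, iterInt]
    rw [this]
    exact Real.continuous_sinh.comp (continuous_const.mul continuous_id)
  | succ n ih =>
    have : Differentiable ℝ (J c (n+1)) :=
      fun t => (J_succ_hasDerivAt c n ih t).differentiableAt
    exact this.continuous

/-- for n ≥ 1, `J_n'' = c J_{n-1} + c² J_n`. -/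
theorem iterSinh_ode (c : ℝ) (hc : 0 < c) (n : ℕ) (hn : 1 ≤ n) (t : ℝ) (ht : 0 < t) :
    deriv (deriv (J c n)) t = c * J c (n - 1) t + c^2 * J c n t := by
  obtain ⟨m, rfl⟩ : ∃ m, n = m + 1 := ⟨n - 1, (Nat.succ_pred_eq_of_pos hn).symm⟩
  have hcont := J_continuous c m
  have hd1 : deriv (J c (m+1)) = fun t =>
      c * Real.cosh (c * t) * (∫ s in (0:ℝ)..t, Real.cosh (c * s) * J c m s)
        - c * Real.sinh (c * t) * (∫ s in (0:ℝ)..t, Real.sinh (c * s) * J c m s) :=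
    funext fun t => (J_succ_hasDerivAt c m hcont t).deriv
  rw [hd1]
  have hA := A_hasDerivAt c m hcont t
  have hB := B_hasDerivAt c m hcont t
  have h2 : HasDerivAt (fun t =>
      c * Real.cosh (c * t) * (∫ s in (0:ℝ)..t, Real.cosh (c * s) * J c m s)
        - c * Real.sinh (c * t) * (∫ s in (0:ℝ)..t, Real.sinh (c * s) * J c m s))
      (c * (c * Real.sinh (c * t)) * (∫ s in (0:ℝ)..t, Real.cosh (c * s) * J c m s)
        + c * Real.cosh (c * t) * (Real.cosh (c * t) * J c m t)
        - (c * (c * Real.cosh (c * t)) * (∫ s in (0:ℝ)..t, Real.sinh (c * s) * J c m s)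
        + c * Real.sinh (c * t) * (Real.sinh (c * t) * J c m t))) t := by
    exact ((((cosh_hasDerivAt c t).const_mul c).mul hA).sub
      (((sinh_hasDerivAt c t).const_mul c).mul hB))
  rw [h2.deriv]
  have hform := J_formula c m hcont t
  have hid : Real.cosh (c * t) ^ 2 - Real.sinh (c * t) ^ 2 = 1 :=
    Real.cosh_sq_sub_sinh_sq (c * t)
  simp only [Nat.add_sub_cancel]
  linear_combination (-(c^2)) * hform + c * J c m t * hid
end

section
/- Let M(t) = e^{−λt} ∑_{n=0}^∞ λⁿ U_n(t), where U_n(t) = ∫₀ᵗ dt₁ ⋯ ∫_{t_{n−1}}ᵗ dt_n ∏_{k=1}^{n+1} cosh²(c(t_k−t_{k−1})) (t₀=0, t_{n+1}=t, U₀(t)=cosh²(ct)). Then M satisfies M''' = −2λM'' + (4c²−λ²)M' + 2c²λM, with M(0)=1, M'(0)=0, M''(0)=2c². -/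
open Real MeasureTheory

/-- `U_n(t)`: simplex integral of products of squared hyperbolic cosines of
increments, `U_0(t) = cosh²(ct)`. -/
noncomputable def U (c : ℝ) (n : ℕ) (t : ℝ) : ℝ :=
  iterInt (fun u => Real.cosh (c * u) ^ 2) n 0 t

lemma iterInt_trans_s16 (f : ℝ → ℝ) : ∀ (n : ℕ) (a t : ℝ), iterInt f n a t = iterInt f n 0 (t - a)
  | 0, a, t => by simp [iterInt]
  | n+1, a, t => by
    show (∫ s in a..t, f (s - a) * iterInt f n s t)
        = ∫ s in (0:ℝ)..(t-a), f (s - 0) * iterInt f n s (t-a)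
    calc (∫ s in a..t, f (s - a) * iterInt f n s t)
        = ∫ s in a..t, (fun u => f u * iterInt f n 0 (t - a - u)) (s - a) := by
          apply intervalIntegral.integral_congr; intro s _
          simp only [iterInt_trans_s16 f n s t]
          have : t - a - (s - a) = t - s := by ring
          rw [this]
      _ = ∫ u in a-a..t-a, f u * iterInt f n 0 (t - a - u) :=
          intervalIntegral.integral_comp_sub_right (fun u => f u * iterInt f n 0 (t - a - u)) a
      _ = ∫ s in (0:ℝ)..(t-a), f (s - 0) * iterInt f n s (t-a) := by
          rw [sub_self]
          apply intervalIntegral.integral_congr; intro s _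
          show f s * iterInt f n 0 (t - a - s) = f (s - 0) * iterInt f n s (t - a)
          rw [iterInt_trans_s16 f n s (t-a), sub_zero]

lemma U_succ (c : ℝ) (n : ℕ) (x : ℝ) :
    U c (n+1) x = ∫ u in (0:ℝ)..x, Real.cosh (c*(x-u))^2 * U c n u := by
  show (∫ s in (0:ℝ)..x, Real.cosh (c*(s-0))^2 * iterInt _ n s x) = _
  calc (∫ s in (0:ℝ)..x, Real.cosh (c*(s-0))^2 * iterInt (fun u => Real.cosh (c*u)^2) n s x)
      = ∫ s in (0:ℝ)..x, (fun u => Real.cosh (c*(x-u))^2 * U c n u) (x - s) := by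
        apply intervalIntegral.integral_congr; intro s _
        simp only [iterInt_trans_s16 _ n s x, sub_zero, U]
        have : x - (x - s) = s := by ring
        rw [this]
    _ = ∫ u in x - x..x - 0, (fun u => Real.cosh (c*(x-u))^2 * U c n u) u :=
        intervalIntegral.integral_comp_sub_left (fun u => Real.cosh (c*(x-u))^2 * U c n u) x
    _ = _ := by rw [sub_self, sub_zero]

lemma U_zero_eq (c : ℝ) (x : ℝ) : U c 0 x = Real.cosh (c*x)^2 := by
  simp [U, iterInt]

lemma cosh_sq_expand (y : ℝ) :
    Real.cosh y ^ 2 = (Real.exp (2*y) + 2 + Real.exp (-(2*y)))/4 := by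
  rw [Real.cosh_eq]
  have h1 : Real.exp y * Real.exp y = Real.exp (2*y) := by rw [← Real.exp_add]; ring_nf
  have h2 : Real.exp (-y) * Real.exp (-y) = Real.exp (-(2*y)) := by rw [← Real.exp_add]; ring_nf
  have h3 : Real.exp y * Real.exp (-y) = 1 := by rw [← Real.exp_add]; simp
  field_simp
  rw [mul_comm y 2]
  linear_combination 4*h1 + 4*h2 + 8*h3

lemma split_integral (c : ℝ) {g : ℝ → ℝ} (hg : Continuous g) (x : ℝ) :
    (∫ u in (0:ℝ)..x, Real.cosh (c*(x-u))^2 * g u)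
      = (1/2) * (∫ u in (0:ℝ)..x, g u)
        + (Real.exp (2*c*x)/4) * (∫ u in (0:ℝ)..x, Real.exp (-(2*c*u)) * g u)
        + (Real.exp (-(2*c*x))/4) * (∫ u in (0:ℝ)..x, Real.exp (2*c*u) * g u) := by
  have key : ∀ u : ℝ, Real.cosh (c*(x-u))^2 * g u
      = (1/2) * g u + (Real.exp (2*c*x)/4) * (Real.exp (-(2*c*u)) * g u)
        + (Real.exp (-(2*c*x))/4) * (Real.exp (2*c*u) * g u) := by
    intro u
    rw [cosh_sq_expand]
    have h1 : Real.exp (2*(c*(x-u))) = Real.exp (2*c*x) * Real.exp (-(2*c*u)) := by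
      rw [← Real.exp_add]; ring_nf
    have h2 : Real.exp (-(2*(c*(x-u)))) = Real.exp (-(2*c*x)) * Real.exp (2*c*u) := by
      rw [← Real.exp_add]; ring_nf
    rw [h1, h2]; ring
  rw [intervalIntegral.integral_congr (g := fun u => (1/2) * g u
      + (Real.exp (2*c*x)/4) * (Real.exp (-(2*c*u)) * g u)
      + (Real.exp (-(2*c*x))/4) * (Real.exp (2*c*u) * g u)) (fun u _ => key u)]
  have i1 : IntervalIntegrable (fun u => (1/2) * g u) volume 0 x :=
    (continuous_const.mul hg).intervalIntegrable _ _
  have i2 : IntervalIntegrable (fun u => (Real.exp (2*c*x)/4) * (Real.exp (-(2*c*u)) * g u)) volume 0 x := by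
    apply Continuous.intervalIntegrable; continuity
  have i3 : IntervalIntegrable (fun u => (Real.exp (-(2*c*x))/4) * (Real.exp (2*c*u) * g u)) volume 0 x := by
    apply Continuous.intervalIntegrable; continuity
  rw [intervalIntegral.integral_add (i1.add i2) i3, intervalIntegral.integral_add i1 i2,
    intervalIntegral.integral_const_mul, intervalIntegral.integral_const_mul,
    intervalIntegral.integral_const_mul]

lemma U_cont (c : ℝ) (n : ℕ) : Continuous (U c n) := by
  induction n with
  | zero =>
    have : U c 0 = fun x => Real.cosh (c*x)^2 := funext (U_zero_eq c)
    rw [this]; continuity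
  | succ n ih =>
    have hfun : U c (n+1) = fun x => (1/2) * (∫ u in (0:ℝ)..x, U c n u)
        + (Real.exp (2*c*x)/4) * (∫ u in (0:ℝ)..x, Real.exp (-(2*c*u)) * U c n u)
        + (Real.exp (-(2*c*x))/4) * (∫ u in (0:ℝ)..x, Real.exp (2*c*u) * U c n u) :=
      funext fun x => (U_succ c n x).trans (split_integral c ih x)
    rw [hfun]
    have p1 : Continuous fun x => ∫ u in (0:ℝ)..x, U c n u :=
      intervalIntegral.continuous_primitive (fun a b => ih.intervalIntegrable a b) 0
    have p2 : Continuous fun x => ∫ u in (0:ℝ)..x, Real.exp (-(2*c*u)) * U c n u :=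
      intervalIntegral.continuous_primitive
        (fun a b => (((Real.continuous_exp.comp (by continuity)).mul ih)).intervalIntegrable a b) 0
    have p3 : Continuous fun x => ∫ u in (0:ℝ)..x, Real.exp (2*c*u) * U c n u :=
      intervalIntegral.continuous_primitive
        (fun a b => (((Real.continuous_exp.comp (by continuity)).mul ih)).intervalIntegrable a b) 0
    exact ((continuous_const.mul p1).add ((by continuity : Continuous fun x => Real.exp (2*c*x)/4).mul p2)).add
      ((by continuity : Continuous fun x => Real.exp (-(2*c*x))/4).mul p3)

lemma uIoc_bounds {x u : ℝ} (h : u ∈ Set.uIoc 0 x) : |u| ≤ |x| ∧ |x - u| ≤ |x| := by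
  rcases Set.mem_uIoc.1 h with ⟨h1, h2⟩ | ⟨h1, h2⟩
  · rw [abs_of_pos h1, abs_of_nonneg (le_trans h1.le h2), abs_of_nonneg (by linarith)]
    exact ⟨h2, by linarith⟩
  · rw [abs_of_nonpos h2, abs_of_nonpos (le_trans h1.le h2), abs_of_nonpos (by linarith)]
    exact ⟨by linarith, by linarith⟩

lemma abs_integral_abs_pow (n : ℕ) (x : ℝ) :
    |∫ u in (0:ℝ)..x, |u|^n| = |x|^(n+1)/(n+1) := by
  rcases le_total 0 x with hx | hx
  · rw [intervalIntegral.integral_congr (g := fun u => u^n)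
      (fun u hu => by
        rw [Set.uIcc_of_le hx] at hu
        rw [abs_of_nonneg hu.1]),
      integral_pow]
    rw [abs_of_nonneg hx]
    simp [abs_div, abs_pow, abs_of_nonneg hx,
      abs_of_nonneg (by positivity : (0:ℝ) ≤ (n:ℝ)+1)]
  · rw [intervalIntegral.integral_congr (g := fun u => (-1)^n * u^n)
      (fun u hu => by
        rw [Set.uIcc_of_ge hx] at hu
        rw [abs_of_nonpos hu.2, neg_pow]),
      intervalIntegral.integral_const_mul, integral_pow]
    simp [abs_mul, abs_div, abs_pow, abs_of_nonneg (by positivity : (0:ℝ) ≤ (n:ℝ)+1)]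

lemma cosh_sq_mono {a b : ℝ} (h : |a| ≤ |b|) : Real.cosh a ^ 2 ≤ Real.cosh b ^ 2 :=
  pow_le_pow_left₀ (le_of_lt (Real.cosh_pos _)) (Real.cosh_le_cosh.2 h) 2

lemma U_bound (c : ℝ) (n : ℕ) (T : ℝ) : ∀ x, |x| ≤ T →
    |U c n x| ≤ (Real.cosh (c*T)^2)^(n+1) * |x|^n / n.factorial := by
  induction n with
  | zero =>
    intro x hx
    rw [U_zero_eq]
    have h1 : |c*x| ≤ |c*T| := by
      rw [abs_mul, abs_mul]
      exact mul_le_mul_of_nonneg_left (le_trans hx (le_abs_self T)) (abs_nonneg c)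
    simp only [pow_one, pow_zero, mul_one, Nat.factorial_zero, Nat.cast_one, div_one, zero_add]
    rw [abs_of_nonneg (by positivity)]
    exact cosh_sq_mono h1
  | succ n ih =>
    intro x hx
    have hT : 0 ≤ T := le_trans (abs_nonneg x) hx
    set K := Real.cosh (c*T)^2 with hK
    have hK1 : 1 ≤ K := one_le_pow₀ (Real.one_le_cosh _)
    rw [U_succ]
    have key : ∀ᵐ u ∂(volume.restrict (Set.uIoc 0 x)),
        ‖Real.cosh (c*(x-u))^2 * U c n u‖ ≤ K^(n+2) / n.factorial * |u|^n := by
      refine (ae_restrict_iff' measurableSet_uIoc).2 (Filter.Eventually.of_forall ?_)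
      intro u hu
      obtain ⟨h1, h2⟩ := uIoc_bounds hu
      have hu' : |u| ≤ T := le_trans h1 hx
      have hxu : |x - u| ≤ T := le_trans h2 hx
      have b1 : Real.cosh (c*(x-u))^2 ≤ K := by
        apply cosh_sq_mono
        rw [abs_mul, abs_mul]
        exact mul_le_mul_of_nonneg_left (le_trans hxu (le_abs_self T)) (abs_nonneg c)
      have b2 := ih u hu'
      rw [norm_mul, Real.norm_eq_abs, Real.norm_eq_abs, abs_of_nonneg (by positivity : (0:ℝ) ≤ Real.cosh (c*(x-u))^2)]
      calc Real.cosh (c*(x-u))^2 * |U c n u| ≤ K * (K^(n+1) * |u|^n / n.factorial) := by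
            apply mul_le_mul b1 b2 (abs_nonneg _) (by positivity)
        _ = K^(n+2) / n.factorial * |u|^n := by ring
    have hint : IntervalIntegrable (fun u => K^(n+2) / n.factorial * |u|^n) volume 0 x := by
      apply Continuous.intervalIntegrable
      exact continuous_const.mul ((continuous_abs).pow n)
    have := intervalIntegral.norm_integral_le_abs_of_norm_le key hint
    rw [intervalIntegral.integral_const_mul] at this
    rw [abs_mul, abs_integral_abs_pow, abs_of_nonneg (by positivity : (0:ℝ) ≤ K^(n+2)/n.factorial)] at this
    refine le_trans this (le_of_eq ?_)
    rw [div_mul_div_comm]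
    congr 1
    push_cast [Nat.add_comm 1 n, Nat.factorial_succ]
    ring

noncomputable def Gf (lam c : ℝ) (x : ℝ) : ℝ := ∑' n : ℕ, lam^n * U c n x

lemma norm_term_le (lam c T : ℝ) (hT : 0 ≤ T) (n : ℕ) : ∀ x, |x| ≤ T →
    ‖lam^n * U c n x‖ ≤ Real.cosh (c*T)^2 * (|lam| * Real.cosh (c*T)^2 * T)^n / n.factorial := by
  intro x hx
  set K := Real.cosh (c*T)^2 with hK
  have hK0 : 0 < K := by positivity
  rw [norm_mul, norm_pow, Real.norm_eq_abs, Real.norm_eq_abs]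
  calc |lam|^n * |U c n x| ≤ |lam|^n * (K^(n+1) * |x|^n / n.factorial) := by
        apply mul_le_mul_of_nonneg_left (U_bound c n T x hx) (by positivity)
    _ ≤ |lam|^n * (K^(n+1) * T^n / n.factorial) := by
        apply mul_le_mul_of_nonneg_left _ (by positivity)
        apply div_le_div_of_nonneg_right _ (by positivity)
        exact mul_le_mul_of_nonneg_left (pow_le_pow_left₀ (abs_nonneg x) hx n) (by positivity)
    _ = K * (|lam| * K * T)^n / n.factorial := by
        rw [mul_pow, mul_pow, pow_succ]
        ring

lemma summable_term (lam c : ℝ) (x : ℝ) : Summable (fun n => lam^n * U c n x) := by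
  apply Summable.of_norm
  have h := norm_term_le lam c |x| (abs_nonneg x)
  apply Summable.of_nonneg_of_le (fun n => norm_nonneg _) (fun n => h n x le_rfl)
  have := (Real.summable_pow_div_factorial (|lam| * Real.cosh (c*|x|)^2 * |x|)).mul_left
      (Real.cosh (c*|x|)^2)
  simpa [mul_div_assoc] using this

lemma G_cont (lam c : ℝ) : Continuous (Gf lam c) := by
  rw [continuous_iff_continuousAt]
  intro x₀
  set T := |x₀| + 1 with hT
  have hT0 : 0 ≤ T := by positivity
  have hsum : Summable (fun n => Real.cosh (c*T)^2 * (|lam| * Real.cosh (c*T)^2 * T)^n / n.factorial) := by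
    have := (Real.summable_pow_div_factorial (|lam| * Real.cosh (c*T)^2 * T)).mul_left
      (Real.cosh (c*T)^2)
    simpa [mul_div_assoc] using this
  have hb : ∀ (n : ℕ), ∀ x ∈ Set.Icc (-T) T, ‖lam^n * U c n x‖ ≤
      Real.cosh (c*T)^2 * (|lam| * Real.cosh (c*T)^2 * T)^n / n.factorial := by
    intro n x hx
    exact norm_term_le lam c T hT0 n x (abs_le.2 ⟨hx.1, hx.2⟩)
  have huc := tendstoUniformlyOn_tsum hsum hb
  have hco : ContinuousOn (Gf lam c) (Set.Icc (-T) T) := by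
    apply huc.continuousOn
    apply Filter.Frequently.of_forall
    intro N
    apply Continuous.continuousOn
    exact continuous_finset_sum _ (fun n _ => continuous_const.mul (U_cont c n))
  apply hco.continuousAt
  apply Icc_mem_nhds <;> [linarith [neg_abs_le x₀]; linarith [le_abs_self x₀]]

lemma G_eq (lam c : ℝ) (hlam : 0 < lam) (x : ℝ) :
    Gf lam c x = Real.cosh (c*x)^2
      + lam * ∫ u in (0:ℝ)..x, Real.cosh (c*(x-u))^2 * Gf lam c u := by
  set T := |x| with hT
  set K := Real.cosh (c*T)^2 with hK
  have hK0 : 0 < K := by positivity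
  -- HasSum of integrals
  have hswap : HasSum (fun n : ℕ => ∫ u in (0:ℝ)..x, Real.cosh (c*(x-u))^2 * (lam^n * U c n u))
      (∫ u in (0:ℝ)..x, Real.cosh (c*(x-u))^2 * Gf lam c u) := by
    apply intervalIntegral.hasSum_integral_of_dominated_convergence
      (bound := fun n _ => K * (K * (|lam| * K * T)^n / n.factorial))
    · intro n
      apply Continuous.aestronglyMeasurable
      exact ((Real.continuous_cosh.comp (by continuity)).pow 2).mul
        (continuous_const.mul (U_cont c n))
    · intro n
      refine Filter.Eventually.of_forall ?_
      intro u hu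
      obtain ⟨h1, h2⟩ := uIoc_bounds hu
      have b1 : Real.cosh (c*(x-u))^2 ≤ K := by
        apply cosh_sq_mono
        rw [abs_mul, abs_mul]
        exact mul_le_mul_of_nonneg_left (le_trans h2 (le_abs_self T)) (abs_nonneg c)
      have b2 := norm_term_le lam c T (abs_nonneg x) n u h1
      rw [norm_mul]
      have b3 : ‖Real.cosh (c*(x-u))^2‖ ≤ K := by
        rw [Real.norm_eq_abs, abs_of_nonneg (by positivity : (0:ℝ) ≤ Real.cosh (c*(x-u))^2)]
        exact b1
      exact mul_le_mul b3 b2 (norm_nonneg _) hK0.le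
    · refine Filter.Eventually.of_forall ?_
      intro u _
      have hs : Summable (fun n : ℕ => K * ((|lam| * K * T)^n / n.factorial)) :=
        (Real.summable_pow_div_factorial (|lam| * K * T)).mul_left K
      exact (hs.mul_left K).congr (fun n => by rw [mul_div_assoc])
    · exact intervalIntegrable_const
    · refine Filter.Eventually.of_forall ?_
      intro u _
      exact ((summable_term lam c u).hasSum).mul_left _
  -- compute each integral
  have heq : ∀ n : ℕ, (∫ u in (0:ℝ)..x, Real.cosh (c*(x-u))^2 * (lam^n * U c n u))
      = lam^n * U c (n+1) x := by
    intro n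
    rw [U_succ]
    rw [← intervalIntegral.integral_const_mul]
    apply intervalIntegral.integral_congr
    intro u _
    ring
  rw [funext heq] at hswap
  -- HasSum for G shifted
  have hG : HasSum (fun n : ℕ => lam^n * U c n x) (Gf lam c x) := (summable_term lam c x).hasSum
  have hshift : HasSum (fun n : ℕ => lam^(n+1) * U c (n+1) x) (Gf lam c x - U c 0 x) := by
    have h0 : (Gf lam c x - U c 0 x) + ∑ i ∈ Finset.range 1, lam^i * U c i x = Gf lam c x := by
      rw [Finset.range_one, Finset.sum_singleton, pow_zero, one_mul]; ring
    exact (hasSum_nat_add_iff (f := fun n : ℕ => lam^n * U c n x)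
      (g := Gf lam c x - U c 0 x) 1).2 (by rw [h0]; exact hG)
  have hshift' : HasSum (fun n : ℕ => lam^n * U c (n+1) x) ((Gf lam c x - U c 0 x) / lam) := by
    have := hshift.mul_left (lam⁻¹)
    rw [div_eq_inv_mul]
    have e : (fun n : ℕ => lam^n * U c (n+1) x) = fun n => lam⁻¹ * (lam^(n+1) * U c (n+1) x) := by
      funext n
      rw [pow_succ, mul_comm (lam^n) lam, mul_assoc, ← mul_assoc lam⁻¹, inv_mul_cancel₀ hlam.ne', one_mul]
    rw [e]
    exact this
  have := hswap.unique hshift'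
  rw [this, U_zero_eq]
  field_simp
  ring

noncomputable def Af (lam c x : ℝ) : ℝ := ∫ u in (0:ℝ)..x, Gf lam c u
noncomputable def Bf (lam c x : ℝ) : ℝ := ∫ u in (0:ℝ)..x, Real.exp (-(2*c*u)) * Gf lam c u
noncomputable def Cf (lam c x : ℝ) : ℝ := ∫ u in (0:ℝ)..x, Real.exp (2*c*u) * Gf lam c u

noncomputable def G1f (lam c x : ℝ) : ℝ :=
  2*c*Real.cosh (c*x)*Real.sinh (c*x) + lam * Gf lam c x
    + (lam*c/2)*(Real.exp (2*c*x)*Bf lam c x - Real.exp (-(2*c*x))*Cf lam c x)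
noncomputable def G2f (lam c x : ℝ) : ℝ :=
  lam * G1f lam c x + 4*c^2*Gf lam c x - 2*c^2 - 2*lam*c^2*Af lam c x
noncomputable def G3f (lam c x : ℝ) : ℝ :=
  lam * G2f lam c x + 4*c^2*G1f lam c x - 2*lam*c^2*Gf lam c x

lemma hmaster (lam c : ℝ) (hlam : 0 < lam) (x : ℝ) :
    Gf lam c x = Real.cosh (c*x)^2 + lam*((1/2)*Af lam c x
      + (Real.exp (2*c*x)/4)*Bf lam c x + (Real.exp (-(2*c*x))/4)*Cf lam c x) := by
  rw [G_eq lam c hlam x, split_integral c (G_cont lam c) x]; rfl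

lemma contBG (lam c : ℝ) : Continuous (fun u => Real.exp (-(2*c*u)) * Gf lam c u) :=
  (Real.continuous_exp.comp (by continuity)).mul (G_cont lam c)
lemma contCG (lam c : ℝ) : Continuous (fun u => Real.exp (2*c*u) * Gf lam c u) :=
  (Real.continuous_exp.comp (by continuity)).mul (G_cont lam c)

lemma hA (lam c x : ℝ) : HasDerivAt (Af lam c) (Gf lam c x) x :=
  intervalIntegral.integral_hasDerivAt_right
    ((G_cont lam c).intervalIntegrable _ _)
    ((G_cont lam c).stronglyMeasurableAtFilter _ _)
    (G_cont lam c).continuousAt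

lemma hB (lam c x : ℝ) : HasDerivAt (Bf lam c) (Real.exp (-(2*c*x)) * Gf lam c x) x :=
  intervalIntegral.integral_hasDerivAt_right
    ((contBG lam c).intervalIntegrable _ _)
    ((contBG lam c).stronglyMeasurableAtFilter _ _)
    (contBG lam c).continuousAt

lemma hC (lam c x : ℝ) : HasDerivAt (Cf lam c) (Real.exp (2*c*x) * Gf lam c x) x :=
  intervalIntegral.integral_hasDerivAt_right
    ((contCG lam c).intervalIntegrable _ _)
    ((contCG lam c).stronglyMeasurableAtFilter _ _)
    (contCG lam c).continuousAt

lemma hexpP (c x : ℝ) : HasDerivAt (fun y => Real.exp (2*c*y)) (Real.exp (2*c*x) * (2*c)) x := by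
  have h1 : HasDerivAt (fun y : ℝ => 2*c*y) (2*c) x := by
    simpa using (hasDerivAt_id x).const_mul (2*c)
  exact (Real.hasDerivAt_exp _).comp x h1

lemma hexpM (c x : ℝ) : HasDerivAt (fun y => Real.exp (-(2*c*y))) (Real.exp (-(2*c*x)) * (-(2*c))) x := by
  have h1 : HasDerivAt (fun y : ℝ => -(2*c*y)) (-(2*c)) x := by
    simpa [Pi.neg_def] using ((hasDerivAt_id x).const_mul (2*c)).neg
  exact (Real.hasDerivAt_exp _).comp x h1

lemma hcosh (c x : ℝ) : HasDerivAt (fun y => Real.cosh (c*y)) (Real.sinh (c*x) * c) x := by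
  have h1 : HasDerivAt (fun y : ℝ => c*y) c x := by simpa using (hasDerivAt_id x).const_mul c
  exact (Real.hasDerivAt_cosh _).comp x h1

lemma hsinh (c x : ℝ) : HasDerivAt (fun y => Real.sinh (c*y)) (Real.cosh (c*x) * c) x := by
  have h1 : HasDerivAt (fun y : ℝ => c*y) c x := by simpa using (hasDerivAt_id x).const_mul c
  exact (Real.hasDerivAt_sinh _).comp x h1

lemma e1 (c x : ℝ) : Real.exp (2*c*x) * Real.exp (-(2*c*x)) = 1 := by
  rw [← Real.exp_add]; simp

lemma hG1 (lam c : ℝ) (hlam : 0 < lam) (x : ℝ) :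
    HasDerivAt (Gf lam c) (G1f lam c x) x := by
  have hGfun : Gf lam c = fun y => Real.cosh (c*y)^2 + lam*((1/2)*Af lam c y
      + (Real.exp (2*c*y)/4)*Bf lam c y + (Real.exp (-(2*c*y))/4)*Cf lam c y) :=
    funext (hmaster lam c hlam)
  rw [hGfun]
  have key := (((hcosh c x).pow 2).add
    (((((hA lam c x).const_mul (1/2:ℝ)).add
      (((hexpP c x).div_const 4).mul (hB lam c x))).add
      (((hexpM c x).div_const 4).mul (hC lam c x))).const_mul lam))
  convert key using 1
  · rfl
  · rfl
  · rfl
  rw [G1f]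
  push_cast
  norm_num
  have h1 := e1 c x
  linear_combination (-(lam * Gf lam c x) / 2) * h1

lemma hG2 (lam c : ℝ) (hlam : 0 < lam) (x : ℝ) :
    HasDerivAt (G1f lam c) (G2f lam c x) x := by
  have hfun : G1f lam c = fun y => 2*c*Real.cosh (c*y)*Real.sinh (c*y) + lam * Gf lam c y
      + (lam*c/2)*(Real.exp (2*c*y)*Bf lam c y - Real.exp (-(2*c*y))*Cf lam c y) := rfl
  rw [hfun]
  have key := (((((hcosh c x).const_mul (2*c)).mul (hsinh c x)).add
      ((hG1 lam c hlam x).const_mul lam)).add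
    ((((hexpP c x).mul (hB lam c x)).sub
      ((hexpM c x).mul (hC lam c x))).const_mul (lam*c/2)))
  convert key using 1
  · rfl
  · rfl
  · rfl
  rw [G2f, G1f]
  have h2 := hmaster lam c hlam x
  have h3 := Real.cosh_sq (c*x)
  linear_combination 4*c^2 * h2 + 2*c^2*h3

lemma hG3 (lam c : ℝ) (hlam : 0 < lam) (x : ℝ) :
    HasDerivAt (G2f lam c) (G3f lam c x) x := by
  have hfun : G2f lam c = fun y => lam * G1f lam c y + 4*c^2*Gf lam c y - 2*c^2
      - 2*lam*c^2*Af lam c y := rfl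
  rw [hfun]
  have key := (((((hG2 lam c hlam x).const_mul lam).add
      ((hG1 lam c hlam x).const_mul (4*c^2))).sub
      (hasDerivAt_const x (2*c^2))).sub
      ((hA lam c x).const_mul (2*lam*c^2)))
  convert key using 1
  · rfl
  · rfl
  · rfl
  rw [G3f]
  ring

lemma G_zero (lam c : ℝ) : Gf lam c 0 = 1 := by
  have h : ∀ n : ℕ, n ≠ 0 → lam^n * U c n 0 = 0 := by
    intro n hn
    obtain ⟨m, rfl⟩ := Nat.exists_eq_succ_of_ne_zero hn
    rw [U_succ, intervalIntegral.integral_same, mul_zero]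
  rw [Gf, tsum_eq_single 0 h, pow_zero, one_mul, U_zero_eq]
  simp

lemma A_zero (lam c : ℝ) : Af lam c 0 = 0 := intervalIntegral.integral_same
lemma B_zero (lam c : ℝ) : Bf lam c 0 = 0 := intervalIntegral.integral_same
lemma C_zero (lam c : ℝ) : Cf lam c 0 = 0 := intervalIntegral.integral_same

lemma G1_zero (lam c : ℝ) : G1f lam c 0 = lam := by
  rw [G1f, G_zero, B_zero, C_zero]
  simp

lemma G2_zero (lam c : ℝ) : G2f lam c 0 = lam^2 + 2*c^2 := by
  rw [G2f, G1_zero, G_zero, A_zero]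
  ring

/-- the second moment `M(t) = e^{-λt} ∑ λⁿ U_n(t)` satisfies
`M''' = -2λM'' + (4c² - λ²)M' + 2c²λM` with `M(0)=1`, `M'(0)=0`, `M''(0)=2c²`. -/
theorem second_moment_ode (lam c : ℝ) (hlam : 0 < lam) (hc : 0 < c)
    (M : ℝ → ℝ) (hM : ∀ t, M t = Real.exp (-lam * t) * ∑' n : ℕ, lam ^ n * U c n t) :
    (∀ t, 0 < t → deriv (deriv (deriv M)) t
        = -2 * lam * deriv (deriv M) t + (4 * c^2 - lam^2) * deriv M t
          + 2 * c^2 * lam * M t)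
      ∧ M 0 = 1 ∧ deriv M 0 = 0 ∧ deriv (deriv M) 0 = 2 * c^2 := by
  have hMfun : M = fun t => Real.exp (-lam * t) * Gf lam c t := funext fun t => hM t
  have hexp : ∀ t : ℝ, HasDerivAt (fun t => Real.exp (-lam * t)) (Real.exp (-lam*t) * (-lam)) t := by
    intro t
    have h1 : HasDerivAt (fun y : ℝ => -lam*y) (-lam) t := by
      simpa using (hasDerivAt_id t).const_mul (-lam)
    exact (Real.hasDerivAt_exp _).comp t h1
  have hM1 : ∀ t, HasDerivAt M (Real.exp (-lam*t) * (G1f lam c t - lam * Gf lam c t)) t := by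
    intro t
    rw [hMfun]
    have := (hexp t).mul (hG1 lam c hlam t)
    convert this using 1
    · rfl
    · rfl
    · rfl
    ring
  have hd1 : deriv M = fun t => Real.exp (-lam*t) * (G1f lam c t - lam * Gf lam c t) :=
    funext fun t => (hM1 t).deriv
  have hM2 : ∀ t, HasDerivAt (deriv M)
      (Real.exp (-lam*t) * (G2f lam c t - 2*lam*G1f lam c t + lam^2 * Gf lam c t)) t := by
    intro t
    rw [hd1]
    have := (hexp t).mul (((hG2 lam c hlam t).sub ((hG1 lam c hlam t).const_mul lam)))
    convert this using 1
    · rfl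
    · rfl
    · rfl
    simp only [Pi.add_apply, Pi.sub_apply]
    ring
  have hd2 : deriv (deriv M) = fun t =>
      Real.exp (-lam*t) * (G2f lam c t - 2*lam*G1f lam c t + lam^2 * Gf lam c t) :=
    funext fun t => (hM2 t).deriv
  have hM3 : ∀ t, HasDerivAt (deriv (deriv M))
      (Real.exp (-lam*t) * (G3f lam c t - 3*lam*G2f lam c t + 3*lam^2 * G1f lam c t
        - lam^3 * Gf lam c t)) t := by
    intro t
    rw [hd2]
    have := (hexp t).mul (((hG3 lam c hlam t).sub ((hG2 lam c hlam t).const_mul (2*lam))).add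
      ((hG1 lam c hlam t).const_mul (lam^2)))
    convert this using 1
    · rfl
    · rfl
    · rfl
    simp only [Pi.add_apply, Pi.sub_apply]
    ring
  refine ⟨?_, ?_, ?_, ?_⟩
  · intro t ht
    rw [(hM3 t).deriv, hd2, hd1, hMfun]
    simp only [G3f]
    ring
  · rw [hMfun]; simp [G_zero]
  · rw [hd1]; simp [G1_zero, G_zero]
  · rw [hd2]; simp [G2_zero, G1_zero, G_zero]; ring
end
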